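/- Let C be an essentially small triangulated category and S a dense complete full subcategory of C. Then the relation ~ on isomorphism classes of objects of C, given by A ~ B if and only if there exist objects S_A and S_B in S with A ⊕ S_A ≅ B ⊕ S_B, is an equivalence relation, and the quotient G_S is an abelian group under the binary operation {A} + {B} := {A ⊕ B} with identity element {0}, where the inverse of {A} is {A'} for any object A' with A ⊕ A' in S. -/

import Mathlib

/-!
Grothendieck groups of essentially small triangulated categories.

`K0 C` is the quotient of the free abelian group on the isomorphism classes of objects
of `C` by the subgroup generated by the Euler relations `⟨X⟩ - ⟨Y⟩ + ⟨Z⟩` coming from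
distinguished triangles `X ⟶ Y ⟶ Z ⟶ X⟦1⟧`; `K0.mk C A` is the class `[A]`.
A full subcategory (identified with its set of objects) is *dense* if every object of `C`
is a direct summand of an object of the subcategory, and *complete* if whenever two of
the three objects of a distinguished triangle lie in it, so does the third.
-/

open CategoryTheory CategoryTheory.Limits CategoryTheory.Pretriangulated ZeroObject

universe w v u

namespace TriK0

variable (C : Type u) [Category.{v} C] [HasZeroObject C] [Preadditive C] [HasShift C ℤ]
  [∀ n : ℤ, (shiftFunctor C n).Additive] [Pretriangulated C]

/-- The isomorphism class of an object. -/
def isoCl (A : C) : Quotient (isIsomorphicSetoid C) := Quotient.mk (isIsomorphicSetoid C) A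

/-- The subgroup of Euler relations coming from distinguished triangles. -/
def K0Rels : AddSubgroup (FreeAbelianGroup (Quotient (isIsomorphicSetoid C))) :=
  AddSubgroup.closure
    { x | ∃ T : Triangle C, T ∈ (distTriang C) ∧
        x = FreeAbelianGroup.of (isoCl C T.obj₁) - FreeAbelianGroup.of (isoCl C T.obj₂)
          + FreeAbelianGroup.of (isoCl C T.obj₃) }

/-- The Grothendieck group of the triangulated category `C`. -/
def K0 : Type u := FreeAbelianGroup (Quotient (isIsomorphicSetoid C)) ⧸ K0Rels C

noncomputable instance : AddCommGroup (K0 C) :=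
  QuotientAddGroup.Quotient.addCommGroup _

/-- The class `[A]` of an object `A` in the Grothendieck group. -/
def K0.mk (A : C) : K0 C := QuotientAddGroup.mk (FreeAbelianGroup.of (isoCl C A))

/-- A full subcategory is dense if every object of `C` is a direct summand of an object
of the subcategory. -/
noncomputable def DenseSub (S : Set C) : Prop :=
  ∀ A : C, ∃ X ∈ S, ∃ A' : C, Nonempty (X ≅ A ⊞ A')

/-- A full subcategory is complete if, in any distinguished triangle, whenever two of the
three objects belong to the subcategory, so does the third. -/
def CompleteSub (S : Set C) : Prop :=
  ∀ T ∈ (distTriang C),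
    (T.obj₁ ∈ S → T.obj₂ ∈ S → T.obj₃ ∈ S) ∧
    (T.obj₁ ∈ S → T.obj₃ ∈ S → T.obj₂ ∈ S) ∧
    (T.obj₂ ∈ S → T.obj₃ ∈ S → T.obj₁ ∈ S)

end TriK0

open TriK0

/-- The relation `A ~ B ↔ ∃ S_A, S_B ∈ S, A ⊕ S_A ≅ B ⊕ S_B` is an equivalence relation,
and the quotient `G_S` is an abelian group with `{A} + {B} = {A ⊕ B}`, identity `{0}`,
and `-{A} = {A'}` whenever `A ⊕ A' ∈ S`. -/
theorem quotient_monoid_is_group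
    (C : Type u) [Category.{v} C] [HasZeroObject C] [Preadditive C] [HasShift C ℤ]
    [∀ n : ℤ, (shiftFunctor C n).Additive] [Pretriangulated C] [EssentiallySmall.{w} C]
    (S : Set C) (hdense : DenseSub C S) (hcomplete : CompleteSub C S)
    (r : C → C → Prop)
    (hr : ∀ A B : C, r A B ↔ ∃ SA ∈ S, ∃ SB ∈ S, Nonempty ((A ⊞ SA) ≅ B ⊞ SB)) :
    Equivalence r ∧
    ∃ inst : AddCommGroup (Quot r), letI := inst;
      ((∀ A B : C, Quot.mk r A + Quot.mk r B = Quot.mk r (A ⊞ B)) ∧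
       ((0 : Quot r) = Quot.mk r (0 : C)) ∧
       (∀ A A' : C, (A ⊞ A') ∈ S → -(Quot.mk r A) = Quot.mk r A')) := by
  classical
  -- Basic facts about `S`.
  obtain ⟨X0, hX0, -⟩ := hdense 0
  have h0 : (0 : C) ∈ S := (hcomplete _ (contractible_distinguished X0)).1 hX0 hX0
  have hiso : ∀ {X Y : C}, X ∈ S → (X ≅ Y) → Y ∈ S := by
    intro X Y hX e
    have hd : (Triangle.mk e.hom (0 : Y ⟶ (0 : C)) (0 : (0 : C) ⟶ X⟦(1 : ℤ)⟧)) ∈ distTriang C :=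
      isomorphic_distinguished _ (contractible_distinguished X) _
        (Triangle.isoMk _ _ (Iso.refl _) e.symm (Iso.refl _) (by exact (e.hom_inv_id).trans (Category.comp_id _).symm) (by exact (Category.comp_id _).trans (comp_zero).symm) (by exact (zero_comp).trans (comp_zero).symm))
    exact (hcomplete _ hd).2.1 hX h0
  have hbi : ∀ {X Y : C}, X ∈ S → Y ∈ S → (X ⊞ Y) ∈ S := by
    intro X Y hX hY
    exact (hcomplete _ (binaryBiproductTriangle_distinguished X Y)).2.1 hX hY
  -- Isomorphism combinators.
  have assoc : ∀ X Y Z : C, (X ⊞ Y) ⊞ Z ≅ X ⊞ (Y ⊞ Z) := fun X Y Z => biprod.associator X Y Z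
  have braid : ∀ X Y : C, X ⊞ Y ≅ Y ⊞ X := fun X Y => biprod.braiding X Y
  have bmap : ∀ {X Y Z W : C}, (X ≅ Y) → (Z ≅ W) → (X ⊞ Z ≅ Y ⊞ W) := fun e f =>
    biprod.mapIso e f
  have swap12 : ∀ X Y Z : C, X ⊞ (Y ⊞ Z) ≅ Y ⊞ (X ⊞ Z) := fun X Y Z =>
    (assoc X Y Z).symm ≪≫ bmap (braid X Y) (Iso.refl Z) ≪≫ assoc Y X Z
  have interch : ∀ X Y Z W : C, (X ⊞ Y) ⊞ (Z ⊞ W) ≅ (X ⊞ Z) ⊞ (Y ⊞ W) := fun X Y Z W =>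
    assoc X Y (Z ⊞ W) ≪≫ bmap (Iso.refl X) (swap12 Y Z W) ≪≫ (assoc X Z (Y ⊞ W)).symm
  have hz : ∀ X : C, X ⊞ (0 : C) ≅ X := fun X =>
    (isoBiprodZero (isZero_zero C)).symm
  -- `r` is an equivalence relation.
  have hriso : ∀ {A B : C}, (A ≅ B) → r A B := fun {A B} e =>
    (hr A B).2 ⟨0, h0, 0, h0, ⟨bmap e (Iso.refl (0 : C))⟩⟩
  have hrefl : ∀ A : C, r A A := fun A => hriso (Iso.refl A)
  have hsymm : ∀ {A B : C}, r A B → r B A := by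
    intro A B h
    obtain ⟨SA, hSA, SB, hSB, ⟨e⟩⟩ := (hr A B).1 h
    exact (hr B A).2 ⟨SB, hSB, SA, hSA, ⟨e.symm⟩⟩
  have htrans : ∀ {A B Cc : C}, r A B → r B Cc → r A Cc := by
    intro A B Cc h1 h2
    obtain ⟨SA, hSA, SB, hSB, ⟨e1⟩⟩ := (hr A B).1 h1
    obtain ⟨SB', hSB', SC, hSC, ⟨e2⟩⟩ := (hr B Cc).1 h2
    refine (hr A Cc).2 ⟨SA ⊞ SB', hbi hSA hSB', SC ⊞ SB, hbi hSC hSB, ⟨?_⟩⟩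
    calc A ⊞ (SA ⊞ SB') ≅ (A ⊞ SA) ⊞ SB' := (assoc _ _ _).symm
      _ ≅ (B ⊞ SB) ⊞ SB' := bmap e1 (Iso.refl _)
      _ ≅ B ⊞ (SB ⊞ SB') := assoc _ _ _
      _ ≅ B ⊞ (SB' ⊞ SB) := bmap (Iso.refl _) (braid _ _)
      _ ≅ (B ⊞ SB') ⊞ SB := (assoc _ _ _).symm
      _ ≅ (Cc ⊞ SC) ⊞ SB := bmap e2 (Iso.refl _)
      _ ≅ Cc ⊞ (SC ⊞ SB) := assoc _ _ _
  -- Addition is compatible with `r`.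
  have haddr : ∀ {A B A' B' : C}, r A A' → r B B' → r (A ⊞ B) (A' ⊞ B') := by
    intro A B A' B' h1 h2
    obtain ⟨SA, hSA, SA', hSA', ⟨e1⟩⟩ := (hr A A').1 h1
    obtain ⟨SB, hSB, SB', hSB', ⟨e2⟩⟩ := (hr B B').1 h2
    refine (hr _ _).2 ⟨SA ⊞ SB, hbi hSA hSB, SA' ⊞ SB', hbi hSA' hSB', ⟨?_⟩⟩
    calc (A ⊞ B) ⊞ (SA ⊞ SB) ≅ (A ⊞ SA) ⊞ (B ⊞ SB) := interch _ _ _ _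
      _ ≅ (A' ⊞ SA') ⊞ (B' ⊞ SB') := bmap e1 e2
      _ ≅ (A' ⊞ B') ⊞ (SA' ⊞ SB') := interch _ _ _ _
  -- Inverses.
  have hneg : ∀ A : C, ∃ A' : C, (A ⊞ A') ∈ S := by
    intro A
    obtain ⟨X, hX, A', ⟨e⟩⟩ := hdense A
    exact ⟨A', hiso hX e⟩
  have hnegwd : ∀ {A B A' B' : C}, r A B → (A ⊞ A') ∈ S → (B ⊞ B') ∈ S → r A' B' := by
    intro A B A' B' h hA hB
    obtain ⟨SA, hSA, SB, hSB, ⟨e⟩⟩ := (hr A B).1 h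
    refine (hr A' B').2 ⟨(B ⊞ B') ⊞ SB, hbi hB hSB, (A ⊞ A') ⊞ SA, hbi hA hSA, ⟨?_⟩⟩
    calc A' ⊞ ((B ⊞ B') ⊞ SB) ≅ A' ⊞ (B ⊞ (B' ⊞ SB)) := bmap (Iso.refl _) (assoc _ _ _)
      _ ≅ A' ⊞ (B' ⊞ (B ⊞ SB)) := bmap (Iso.refl _) (swap12 _ _ _)
      _ ≅ A' ⊞ (B' ⊞ (A ⊞ SA)) := bmap (Iso.refl _) (bmap (Iso.refl _) e.symm)
      _ ≅ B' ⊞ (A' ⊞ (A ⊞ SA)) := swap12 _ _ _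
      _ ≅ B' ⊞ (A ⊞ (A' ⊞ SA)) := bmap (Iso.refl _) (swap12 _ _ _)
      _ ≅ B' ⊞ ((A ⊞ A') ⊞ SA) := bmap (Iso.refl _) (assoc _ _ _).symm
  -- The group structure.
  let negRep : C → C := fun A => Classical.choose (hneg A)
  have hnegRep : ∀ A : C, (A ⊞ negRep A) ∈ S := fun A => Classical.choose_spec (hneg A)
  let add : Quot r → Quot r → Quot r :=
    Quot.map₂ (fun A B => A ⊞ B) (fun a b₁ b₂ h => haddr (hrefl a) h)
      (fun a₁ a₂ b h => haddr h (hrefl b))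
  let neg : Quot r → Quot r :=
    Quot.map negRep (fun A B h => hnegwd h (hnegRep A) (hnegRep B))
  have add_mk : ∀ A B : C, add (Quot.mk r A) (Quot.mk r B) = Quot.mk r (A ⊞ B) :=
    fun A B => rfl
  have neg_mk : ∀ A : C, neg (Quot.mk r A) = Quot.mk r (negRep A) := fun A => rfl
  refine ⟨⟨hrefl, fun h => hsymm h, fun h1 h2 => htrans h1 h2⟩, ?_⟩
  letI : Zero (Quot r) := ⟨Quot.mk r (0 : C)⟩
  letI : Add (Quot r) := ⟨add⟩
  letI : Neg (Quot r) := ⟨neg⟩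
  refine ⟨{ add := add
            zero := Quot.mk r (0 : C)
            neg := neg
            nsmul := nsmulRec
            zsmul := zsmulRec
            add_assoc := ?_
            zero_add := ?_
            add_zero := ?_
            add_comm := ?_
            neg_add_cancel := ?_ }, ?_, rfl, ?_⟩
  · intro a b c
    induction a using Quot.ind with | _ A => ?_
    induction b using Quot.ind with | _ B => ?_
    induction c using Quot.ind with | _ Cc => ?_
    show Quot.mk r ((A ⊞ B) ⊞ Cc) = Quot.mk r (A ⊞ (B ⊞ Cc))
    exact Quot.sound (hriso (assoc A B Cc))
  · intro a
    induction a using Quot.ind with | _ A => ?_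
    show Quot.mk r ((0 : C) ⊞ A) = Quot.mk r A
    exact Quot.sound (hriso (braid (0 : C) A ≪≫ hz A))
  · intro a
    induction a using Quot.ind with | _ A => ?_
    show Quot.mk r (A ⊞ (0 : C)) = Quot.mk r A
    exact Quot.sound (hriso (hz A))
  · intro a
    induction a using Quot.ind with | _ A => ?_
    show Quot.mk r (negRep A ⊞ A) = Quot.mk r (0 : C)
    refine Quot.sound ((hr _ _).2 ⟨0, h0, A ⊞ negRep A, hnegRep A, ⟨?_⟩⟩)
    calc (negRep A ⊞ A) ⊞ (0 : C) ≅ negRep A ⊞ A := hz _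
      _ ≅ A ⊞ negRep A := braid _ _
      _ ≅ (A ⊞ negRep A) ⊞ (0 : C) := (hz _).symm
      _ ≅ (0 : C) ⊞ (A ⊞ negRep A) := braid _ _
  · intro a b
    induction a using Quot.ind with | _ A => ?_
    induction b using Quot.ind with | _ B => ?_
    show Quot.mk r (A ⊞ B) = Quot.mk r (B ⊞ A)
    exact Quot.sound (hriso (braid A B))
  · intro A B
    exact add_mk A B
  · intro A A' hAA'
    show neg (Quot.mk r A) = Quot.mk r A'
    rw [neg_mk]
    exact Quot.sound (hnegwd (hrefl A) (hnegRep A) hAA')
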